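/- arXiv:2110.14748 — 2 statements merged into one kernel-verified Lean document; each statement's English description precedes it below -/
import Mathlib

section
/- For a weighted context tree of maximal depth D over an m-ary alphabet, where each node s at depth d < D has weighted probability P_w^s = γ·P_e(a_s) + (1-γ)·∏_{j=0}^{m-1} P_w^{js} and each node at depth D has P_w^s = P_e(a_s), the root weighted probability satisfies P_w^λ = Σ_{S ∈ C_D} π_D(S) ∏_{s∈S} P_e(a_s), where π_D(S) = (1-γ)^{(|S|-1)/(m-1)} · γ^{|S| - L_D(S)} and the sum is over all complete proper context sets S of depth at most D. -/
open Finset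

/-- All strings of length exactly `k` over the alphabet `Fin m`. -/
def listsLen (m : ℕ) : ℕ → Finset (List (Fin m))
  | 0 => {[]}
  | k + 1 => ((Finset.univ : Finset (Fin m)) ×ˢ listsLen m k).image (fun p => p.1 :: p.2)

/-- All strings of length at most `D` over the alphabet `Fin m`. -/
def listsUpTo (m D : ℕ) : Finset (List (Fin m)) :=
  (Finset.range (D + 1)).biUnion (fun k => listsLen m k)

/-- `C_D`: all complete and proper context sets (models) of depth at most `D`
over the `m`-ary alphabet.  Properness: no element is a (not necessarily
proper) suffix of a different element.  Completeness: every string of length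
`D` has a suffix in the set. -/
def contextSets (m D : ℕ) : Finset (Finset (List (Fin m))) :=
  (listsUpTo m D).powerset.filter
    (fun S => (∀ s ∈ S, ∀ t ∈ S, s <:+ t → s = t) ∧
      ∀ l ∈ listsLen m D, ∃ s ∈ S, s <:+ l)

/-- The prior `π_D(S) = (1-γ)^((|S|-1)/(m-1)) γ^(|S| - L_D(S))` on models. -/
noncomputable def modelPrior (m : ℕ) (γ : ℝ) (D : ℕ) (S : Finset (List (Fin m))) : ℝ :=
  (1 - γ) ^ ((S.card - 1) / (m - 1)) * γ ^ (S.card - (S.filter (fun s => s.length = D)).card)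

/-- The weighted probability `P_w^s` of a node `s` with remaining depth `d`:
at remaining depth `0` (i.e. at maximal depth `D`) it is `P_e(a_s)`, and
otherwise `γ P_e(a_s) + (1-γ) ∏_j P_w^{js}`. -/
noncomputable def Pw (m : ℕ) (γ : ℝ) (Pe : List (Fin m) → ℝ) : ℕ → List (Fin m) → ℝ
  | 0, s => Pe s
  | d + 1, s => γ * Pe s + (1 - γ) * ∏ j : Fin m, Pw m γ Pe d (j :: s)

namespace CTWAux

variable {m : ℕ}

lemma mem_listsLen {k : ℕ} {l : List (Fin m)} : l ∈ listsLen m k ↔ l.length = k := by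
  induction k generalizing l with
  | zero => simp [listsLen, List.length_eq_zero_iff]
  | succ k ih =>
    simp only [listsLen, Finset.mem_image, Finset.mem_product, Finset.mem_univ, true_and]
    constructor
    · rintro ⟨⟨a, t⟩, ht, rfl⟩
      simp [ih.mp ht]
    · intro hl
      cases l with
      | nil => simp at hl
      | cons a t => exact ⟨(a, t), ih.mpr (by simpa using hl), rfl⟩

lemma mem_listsUpTo {D : ℕ} {l : List (Fin m)} : l ∈ listsUpTo m D ↔ l.length ≤ D := by
  simp only [listsUpTo, Finset.mem_biUnion, Finset.mem_range, mem_listsLen]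
  constructor
  · rintro ⟨k, hk, rfl⟩; omega
  · intro h; exact ⟨l.length, by omega, rfl⟩

lemma mem_contextSets {D : ℕ} {T : Finset (List (Fin m))} :
    T ∈ contextSets m D ↔
      (∀ t ∈ T, t.length ≤ D) ∧ (∀ s ∈ T, ∀ t ∈ T, s <:+ t → s = t) ∧
      (∀ l : List (Fin m), l.length = D → ∃ s ∈ T, s <:+ l) := by
  simp only [contextSets, Finset.mem_filter, Finset.mem_powerset, Finset.subset_iff,
    mem_listsUpTo, mem_listsLen, and_assoc]

lemma concat_inj {u v : List (Fin m)} {i j : Fin m} (h : u ++ [i] = v ++ [j]) :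
    u = v ∧ i = j := by
  obtain ⟨h1, h2⟩ := List.append_inj' h rfl
  exact ⟨h1, by simpa using h2⟩

/-- Glue `m` trees into one tree whose `j`-th subtree is `g j`. -/
def glue (g : Fin m → Finset (List (Fin m))) : Finset (List (Fin m)) :=
  Finset.univ.biUnion fun j => (g j).image (· ++ [j])

/-- The `j`-th subtree of a tree. -/
def split (T : Finset (List (Fin m))) (j : Fin m) : Finset (List (Fin m)) :=
  (T.filter fun t => t.getLast? = some j).image List.dropLast

lemma mem_glue {g : Fin m → Finset (List (Fin m))} {t : List (Fin m)} :
    t ∈ glue g ↔ ∃ j, ∃ u ∈ g j, t = u ++ [j] := by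
  simp only [glue, Finset.mem_biUnion, Finset.mem_univ, Finset.mem_image, true_and, eq_comm]

lemma mem_split {T : Finset (List (Fin m))} {j : Fin m} {u : List (Fin m)} :
    u ∈ split T j ↔ u ++ [j] ∈ T := by
  constructor
  · intro hu
    simp only [split, Finset.mem_image, Finset.mem_filter] at hu
    obtain ⟨t, ⟨ht, hlast⟩, rfl⟩ := hu
    have hne : t ≠ [] := by rintro rfl; simp at hlast
    rw [List.getLast?_eq_getLast hne] at hlast
    have hj : t.getLast hne = j := by injection hlast
    rw [← hj, List.dropLast_append_getLast hne]
    exact ht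
  · intro h
    simp only [split, Finset.mem_image, Finset.mem_filter]
    exact ⟨u ++ [j], ⟨h, List.getLast?_concat⟩, List.dropLast_concat⟩

lemma nil_notin_glue {g : Fin m → Finset (List (Fin m))} : ([] : List (Fin m)) ∉ glue g := by
  rw [mem_glue]
  rintro ⟨j, u, _, h⟩
  simp at h

lemma glue_disjoint (g : Fin m → Finset (List (Fin m))) :
    ∀ i ∈ (Finset.univ : Finset (Fin m)), ∀ j ∈ Finset.univ, i ≠ j →
      Disjoint ((g i).image (· ++ [i])) ((g j).image (· ++ [j])) := by
  intro i _ j _ hij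
  rw [Finset.disjoint_left]
  rintro t ht ht'
  simp only [Finset.mem_image] at ht ht'
  obtain ⟨u, _, rfl⟩ := ht
  obtain ⟨v, _, h⟩ := ht'
  exact hij ((concat_inj h).2.symm)

lemma card_glue (g : Fin m → Finset (List (Fin m))) :
    (glue g).card = ∑ j, (g j).card := by
  rw [glue, Finset.card_biUnion (glue_disjoint g)]
  exact Finset.sum_congr rfl fun j _ =>
    Finset.card_image_of_injective _ (fun a b h => (concat_inj h).1)

lemma prod_glue (g : Fin m → Finset (List (Fin m))) (f : List (Fin m) → ℝ) :
    ∏ t ∈ glue g, f t = ∏ j, ∏ u ∈ g j, f (u ++ [j]) := by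
  rw [glue, Finset.prod_biUnion (fun i _ j _ hij =>
    glue_disjoint g i (Finset.mem_univ i) j (Finset.mem_univ j) hij)]
  exact Finset.prod_congr rfl fun j _ =>
    Finset.prod_image (fun a _ b _ h => (concat_inj h).1)

lemma filter_glue (g : Fin m → Finset (List (Fin m))) (p : List (Fin m) → Prop)
    [DecidablePred p] :
    (glue g).filter p = glue fun j => (g j).filter fun u => p (u ++ [j]) := by
  rw [glue, glue, Finset.filter_biUnion]
  congr 1
  funext j
  ext t
  simp only [Finset.mem_filter, Finset.mem_image]
  aesop

lemma glue_mem {d : ℕ} {g : Fin m → Finset (List (Fin m))}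
    (hg : ∀ j, g j ∈ contextSets m d) : glue g ∈ contextSets m (d + 1) := by
  have hg' := fun j => mem_contextSets.mp (hg j)
  rw [mem_contextSets]
  refine ⟨?_, ?_, ?_⟩
  · intro t ht
    rw [mem_glue] at ht
    obtain ⟨j, u, hu, rfl⟩ := ht
    have := (hg' j).1 u hu
    simp only [List.length_append, List.length_singleton]
    omega
  · intro s hs t ht hst
    rw [mem_glue] at hs ht
    obtain ⟨i, u, hu, rfl⟩ := hs
    obtain ⟨j, v, hv, rfl⟩ := ht
    obtain ⟨p, hp⟩ := hst
    have h2 : (p ++ u) ++ [i] = v ++ [j] := by simpa [List.append_assoc] using hp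
    obtain ⟨h1, rfl⟩ := concat_inj h2
    rw [(hg' i).2.1 u hu v hv ⟨p, h1⟩]
  · intro l hl
    have hne : l ≠ [] := by
      intro h; rw [h] at hl; simp at hl
    obtain ⟨u, hu, p, hp⟩ := (hg' (l.getLast hne)).2.2 l.dropLast
      (by have := l.length_dropLast; omega)
    refine ⟨u ++ [l.getLast hne], mem_glue.mpr ⟨l.getLast hne, u, hu, rfl⟩, p, ?_⟩
    rw [← List.append_assoc, hp, List.dropLast_append_getLast]

lemma split_mem {d : ℕ} {T : Finset (List (Fin m))} (hT : T ∈ contextSets m (d + 1))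
    (hnil : ([] : List (Fin m)) ∉ T) (j : Fin m) : split T j ∈ contextSets m d := by
  obtain ⟨hlen, hprop, hcomp⟩ := mem_contextSets.mp hT
  rw [mem_contextSets]
  refine ⟨?_, ?_, ?_⟩
  · intro u hu
    have := hlen _ (mem_split.mp hu)
    simp only [List.length_append, List.length_singleton] at this
    omega
  · intro u hu v hv huv
    obtain ⟨p, hp⟩ := huv
    have h2 := hprop _ (mem_split.mp hu) _ (mem_split.mp hv)
      ⟨p, by rw [← List.append_assoc, hp]⟩
    exact (concat_inj h2).1
  · intro l hl
    obtain ⟨s, hs, p, hp⟩ := hcomp (l ++ [j]) (by simp [hl])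
    have hsne : s ≠ [] := fun h => hnil (h ▸ hs)
    have hs2 : s.dropLast ++ [s.getLast hsne] = s := List.dropLast_append_getLast hsne
    have h3 : (p ++ s.dropLast) ++ [s.getLast hsne] = l ++ [j] := by
      rw [List.append_assoc, hs2, hp]
    obtain ⟨h1, h2⟩ := concat_inj h3
    refine ⟨s.dropLast, mem_split.mpr ?_, p, h1⟩
    rw [← h2, hs2]
    exact hs

lemma glue_split {d : ℕ} {T : Finset (List (Fin m))} (hT : T ∈ contextSets m (d + 1))
    (hnil : ([] : List (Fin m)) ∉ T) : glue (split T) = T := by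
  ext t
  rw [mem_glue]
  constructor
  · rintro ⟨j, u, hu, rfl⟩
    exact mem_split.mp hu
  · intro ht
    have hne : t ≠ [] := fun h => hnil (h ▸ ht)
    exact ⟨t.getLast hne, t.dropLast,
      mem_split.mpr (by rw [List.dropLast_append_getLast hne]; exact ht),
      (List.dropLast_append_getLast hne).symm⟩

lemma split_glue (g : Fin m → Finset (List (Fin m))) (j : Fin m) :
    split (glue g) j = g j := by
  ext u
  rw [mem_split, mem_glue]
  constructor
  · rintro ⟨i, v, hv, h⟩
    obtain ⟨rfl, rfl⟩ := concat_inj h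
    exact hv
  · intro hu
    exact ⟨j, u, hu, rfl⟩

lemma notin_of_ne {d : ℕ} {T : Finset (List (Fin m))} (hT : T ∈ contextSets m d)
    (hne : T ≠ {[]}) : ([] : List (Fin m)) ∉ T := by
  intro h
  obtain ⟨_, hprop, _⟩ := mem_contextSets.mp hT
  exact hne (Finset.eq_singleton_iff_unique_mem.mpr
    ⟨h, fun t ht => (hprop [] h t ht t.nil_suffix).symm⟩)

lemma singleton_mem {D : ℕ} : ({[]} : Finset (List (Fin m))) ∈ contextSets m D :=
  mem_contextSets.mpr ⟨by simp, by simp, fun l _ => ⟨[], Finset.mem_singleton_self [], l.nil_suffix⟩⟩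

lemma contextSets_zero {T : Finset (List (Fin m))} :
    T ∈ contextSets m 0 ↔ T = {[]} := by
  constructor
  · intro hT
    obtain ⟨hlen, _, hcomp⟩ := mem_contextSets.mp hT
    obtain ⟨s, hs, hsuf⟩ := hcomp [] rfl
    rw [List.suffix_nil.mp hsuf] at hs
    exact Finset.eq_singleton_iff_unique_mem.mpr
      ⟨hs, fun t ht => List.length_eq_zero_iff.mp (by have := hlen t ht; omega)⟩
  · rintro rfl; exact singleton_mem

lemma card_mod (hm : 2 ≤ m) : ∀ (d : ℕ) (T : Finset (List (Fin m))),
    T ∈ contextSets m d → ∃ k, T.card = (m - 1) * k + 1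
  | 0, T, hT => ⟨0, by rw [contextSets_zero.mp hT]; simp⟩
  | d + 1, T, hT => by
    by_cases hne : T = {[]}
    · exact ⟨0, by rw [hne]; simp⟩
    · have hnil := notin_of_ne hT hne
      choose k hk using fun j => card_mod hm d (split T j) (split_mem hT hnil j)
      refine ⟨(∑ j, k j) + 1, ?_⟩
      have hc := card_glue (split T)
      rw [glue_split hT hnil] at hc
      rw [hc, Finset.sum_congr rfl fun j _ => hk j, Finset.sum_add_distrib,
        ← Finset.mul_sum, Finset.sum_const, Finset.card_univ, Fintype.card_fin,
        smul_eq_mul, Nat.mul_one, Nat.mul_add]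
      omega

lemma modelPrior_singleton_succ (γ : ℝ) (d : ℕ) :
    modelPrior m γ (d + 1) ({[]} : Finset (List (Fin m))) = γ := by
  rw [modelPrior, Finset.filter_singleton]
  simp

lemma modelPrior_glue (hm : 2 ≤ m) (γ : ℝ) (d : ℕ) (g : Fin m → Finset (List (Fin m)))
    (hg : ∀ j, g j ∈ contextSets m d) :
    modelPrior m γ (d + 1) (glue g) = (1 - γ) * ∏ j, modelPrior m γ d (g j) := by
  choose k hk using fun j => card_mod hm d (g j) (hg j)
  set L := fun j => ((g j).filter fun u => u.length = d).card with hL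
  have hLle : ∀ j, L j ≤ (g j).card := fun j => Finset.card_filter_le _ _
  have hcard : (glue g).card = ∑ j, (g j).card := card_glue g
  have hfilter : ((glue g).filter fun t => t.length = d + 1).card = ∑ j, L j := by
    rw [filter_glue, card_glue]
    refine Finset.sum_congr rfl fun j _ => ?_
    congr 1
    exact Finset.filter_congr fun u _ => by simp
  have e1 : (glue g).card - 1 = (m - 1) * ((∑ j, k j) + 1) := by
    rw [hcard, Finset.sum_congr rfl fun j _ => hk j, Finset.sum_add_distrib,
      ← Finset.mul_sum, Finset.sum_const, Finset.card_univ, Fintype.card_fin,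
      smul_eq_mul, Nat.mul_one, Nat.mul_add]
    omega
  have e2 : (glue g).card - ((glue g).filter fun t => t.length = d + 1).card
      = ∑ j, ((g j).card - L j) := by
    rw [hcard, hfilter]
    have h3 : ∑ j, (g j).card = ∑ j, ((g j).card - L j) + ∑ j, L j := by
      rw [← Finset.sum_add_distrib]
      exact Finset.sum_congr rfl fun j _ => (Nat.sub_add_cancel (hLle j)).symm
    omega
  have hdiv : ∀ j, ((g j).card - 1) / (m - 1) = k j := fun j => by
    rw [hk j, Nat.add_sub_cancel, Nat.mul_div_cancel_left _ (by omega : 0 < m - 1)]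
  rw [modelPrior, e1, e2, Nat.mul_div_cancel_left _ (by omega : 0 < m - 1)]
  have hrhs : ∀ j, modelPrior m γ d (g j)
      = (1 - γ) ^ k j * γ ^ ((g j).card - L j) := fun j => by
    rw [modelPrior, hdiv j]
  rw [Finset.prod_congr rfl fun j _ => hrhs j, Finset.prod_mul_distrib,
    Finset.prod_pow_eq_pow_sum, Finset.prod_pow_eq_pow_sum, pow_succ]
  ring

lemma key (hm : 2 ≤ m) (γ : ℝ) (Pe : List (Fin m) → ℝ) :
    ∀ (d : ℕ) (s : List (Fin m)),
      Pw m γ Pe d s = ∑ T ∈ contextSets m d, modelPrior m γ d T * ∏ t ∈ T, Pe (t ++ s) := by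
  intro d
  induction d with
  | zero =>
    intro s
    have hz : contextSets m 0 = {{([] : List (Fin m))}} :=
      Finset.ext fun T => by rw [contextSets_zero, Finset.mem_singleton]
    rw [hz, Finset.sum_singleton]
    simp [Pw, modelPrior, Finset.filter_singleton]
  | succ d ih =>
    intro s
    rw [← Finset.add_sum_erase _ _ (singleton_mem : ({[]} : Finset (List (Fin m))) ∈ contextSets m (d + 1))]
    have hPw : Pw m γ Pe (d + 1) s = γ * Pe s + (1 - γ) * ∏ j : Fin m, Pw m γ Pe d (j :: s) := rfl
    rw [hPw]
    congr 1
    · rw [modelPrior_singleton_succ, Finset.prod_singleton, List.nil_append]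
    · rw [Finset.prod_congr rfl fun j _ => ih (j :: s), Finset.prod_univ_sum,
        Finset.mul_sum]
      refine Finset.sum_nbij' glue (fun T j => split T j) ?_ ?_ ?_ ?_ ?_
      · intro g hg
        rw [Fintype.mem_piFinset] at hg
        refine Finset.mem_erase.mpr ⟨?_, glue_mem hg⟩
        intro h
        exact nil_notin_glue (h ▸ Finset.mem_singleton_self ([] : List (Fin m)))
      · intro T hT
        obtain ⟨hne, hT'⟩ := Finset.mem_erase.mp hT
        exact Fintype.mem_piFinset.mpr fun j => split_mem hT' (notin_of_ne hT' hne) j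
      · intro g _
        funext j
        exact split_glue g j
      · intro T hT
        obtain ⟨hne, hT'⟩ := Finset.mem_erase.mp hT
        exact glue_split hT' (notin_of_ne hT' hne)
      · intro g hg
        rw [Fintype.mem_piFinset] at hg
        rw [modelPrior_glue hm γ d g hg, prod_glue, mul_assoc, ← Finset.prod_mul_distrib]
        congr 1
        refine Finset.prod_congr rfl fun j _ => ?_
        congr 1
        exact Finset.prod_congr rfl fun u _ => by rw [List.append_assoc]; rfl

end CTWAux

/-- the root weighted probability is the `π_D`-mixture over all
complete proper context sets of the products of the leaf values. -/
theorem ctw_root_weighted_probability (m D : ℕ) (hm : 2 ≤ m) (γ : ℝ)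
    (hγ : γ ∈ Set.Ioo (0:ℝ) 1) (Pe : List (Fin m) → ℝ) (hPe : ∀ s, 0 ≤ Pe s) :
    Pw m γ Pe D [] = ∑ S ∈ contextSets m D, modelPrior m γ D S * ∏ s ∈ S, Pe s := by
  rw [CTWAux.key hm γ Pe D []]
  exact Finset.sum_congr rfl fun S _ => by
    congr 1
    exact Finset.prod_congr rfl fun s _ => by rw [List.append_nil]
end

section
/- The KT probability P_e(a) equals the Dirichlet mixture of i.i.d. multinomial probabilities with Jeffreys prior: for a counter vector a over the m-ary alphabet, P_e(a) = ∫_{Δ_m} ∏_{j} θ_j^{a(j)} · Dir(θ; 1/2,...,1/2) dθ, where Dir(θ; 1/2,...,1/2) = Γ(m/2)/Γ(1/2)^m · ∏_j θ_j^{-1/2} is the Dirichlet(1/2,...,1/2) density on the probability simplex Δ_m. -/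
open Finset MeasureTheory

/-- The Krichevsky–Trofimov probability of a counter vector `a` over an
`m`-ary alphabet. -/
noncomputable def ktProb (m : ℕ) (a : Fin m → ℕ) : ℝ :=
  (∏ j : Fin m, ∏ i ∈ Finset.range (a j), ((i : ℝ) + 1/2)) /
    (∏ i ∈ Finset.range (∑ j, a j), ((m : ℝ)/2 + (i : ℝ)))

section auxiliary
open intervalIntegral

lemma real_beta (u v : ℝ) (hu : 0 < u) (hv : 0 < v) :
    ∫ t in (0:ℝ)..1, t ^ (u-1) * (1-t) ^ (v-1) =
      Real.Gamma u * Real.Gamma v / Real.Gamma (u + v) := by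
  have key := Complex.Gamma_mul_Gamma_eq_betaIntegral (s := (u:ℂ)) (t := (v:ℂ))
    (by simpa using hu) (by simpa using hv)
  have hβ : Complex.betaIntegral (u:ℂ) (v:ℂ) =
      ((∫ t in (0:ℝ)..1, t ^ (u-1) * (1-t) ^ (v-1) : ℝ) : ℂ) := by
    rw [Complex.betaIntegral, ← intervalIntegral.integral_ofReal]
    refine intervalIntegral.integral_congr fun x hx => ?_
    rw [Set.uIcc_of_le (by norm_num : (0:ℝ) ≤ 1)] at hx
    push_cast
    rw [Complex.ofReal_cpow hx.1, Complex.ofReal_cpow (by linarith [hx.2] : (0:ℝ) ≤ 1 - x),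
      Complex.ofReal_sub, Complex.ofReal_sub, Complex.ofReal_one]
    norm_cast
  rw [hβ, ← Complex.ofReal_add, Complex.Gamma_ofReal, Complex.Gamma_ofReal,
    Complex.Gamma_ofReal, ← Complex.ofReal_mul, ← Complex.ofReal_mul] at key
  have h2 := Complex.ofReal_injective key
  have hG : Real.Gamma (u+v) ≠ 0 := (Real.Gamma_pos_of_pos (by linarith)).ne'
  field_simp
  linarith [h2]

lemma real_beta_integrable (u v : ℝ) (hu : 0 < u) (hv : 0 < v) :
    IntegrableOn (fun t : ℝ => t ^ (u-1) * (1-t) ^ (v-1)) (Set.Ioc 0 1) := by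
  have h := (Complex.betaIntegral_convergent (u := (u:ℂ)) (v := (v:ℂ))
    (by simpa using hu) (by simpa using hv))
  rw [intervalIntegrable_iff_integrableOn_Ioc_of_le (by norm_num : (0:ℝ) ≤ 1)] at h
  refine h.norm.congr ((ae_restrict_mem measurableSet_Ioc).mono fun x hx => ?_)
  have hx0 : (0:ℝ) ≤ x := hx.1.le
  have hx1 : (0:ℝ) ≤ 1 - x := by linarith [hx.2]
  simp only [← Complex.ofReal_cpow hx0, ← Complex.ofReal_one, ← Complex.ofReal_sub,
    ← Complex.ofReal_cpow hx1, ← Complex.ofReal_mul, Complex.norm_real]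
  exact abs_of_nonneg (mul_nonneg (Real.rpow_nonneg hx0 _) (Real.rpow_nonneg hx1 _))
lemma real_beta_lintegral (u v : ℝ) (hu : 0 < u) (hv : 0 < v) :
    ∫⁻ t in Set.Ioo (0:ℝ) 1, ENNReal.ofReal (t ^ (u-1) * (1-t) ^ (v-1)) =
      ENNReal.ofReal (Real.Gamma u * Real.Gamma v / Real.Gamma (u + v)) := by
  rw [Measure.restrict_congr_set Ioo_ae_eq_Ioc]
  rw [← ofReal_integral_eq_lintegral_ofReal (real_beta_integrable u v hu hv)
    ((ae_restrict_mem measurableSet_Ioc).mono fun x hx =>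
      mul_nonneg (Real.rpow_nonneg hx.1.le _) (Real.rpow_nonneg (by linarith [hx.2]) _))]
  rw [← intervalIntegral.integral_of_le (by norm_num : (0:ℝ) ≤ 1), real_beta u v hu hv]

lemma measurable_rpow_const (c : ℝ) : Measurable fun x : ℝ => x ^ c := by
  have h : (fun x : ℝ => x ^ c) = fun x =>
      if x = 0 then (0:ℝ) ^ c
      else if x < 0 then Real.exp (Real.log x * c) * Real.cos (c * Real.pi)
      else Real.exp (Real.log x * c) := by
    funext x
    rcases lt_trichotomy x 0 with h|h|h
    · rw [if_neg h.ne, if_pos h, Real.rpow_def_of_neg h]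
    · simp [h]
    · rw [if_neg h.ne', if_neg (not_lt.2 h.le), Real.rpow_def_of_pos h]
  rw [h]
  apply Measurable.ite (MeasurableSet.singleton 0 : MeasurableSet {x : ℝ | x = 0})
    measurable_const
  exact Measurable.ite measurableSet_Iio
    (((Real.measurable_log.mul_const c).exp).mul_const _)
    ((Real.measurable_log.mul_const c).exp)

lemma lintegral_comp_smul_pi {n : ℕ} (g : (Fin n → ℝ) → ENNReal) (hg : Measurable g)
    {R : ℝ} (hR : 0 < R) :
    ∫⁻ z, g (R • z) = ENNReal.ofReal ((R ^ n)⁻¹) * ∫⁻ y, g y := by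
  have h := Measure.map_addHaar_smul (volume : Measure (Fin n → ℝ)) hR.ne'
  have h2 : Measurable fun z : Fin n → ℝ => R • z := measurable_const_smul R
  rw [← lintegral_map hg h2, h, lintegral_smul_measure,
    Module.finrank_pi, Fintype.card_fin, abs_of_nonneg (by positivity), smul_eq_mul]

lemma prod_gamma (s : ℝ) (hs : 0 < s) (k : ℕ) :
    ∏ i ∈ Finset.range k, (s + (i:ℝ)) = Real.Gamma (s + k) / Real.Gamma s := by
  induction k with
  | zero => simp [div_self (Real.Gamma_pos_of_pos hs).ne']
  | succ k ih =>
      rw [Finset.prod_range_succ, ih]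
      have h1 : (0:ℝ) < s + k := by positivity
      have : Real.Gamma (s + (k+1)) = (s + k) * Real.Gamma (s + k) := by
        rw [show s + ((k:ℝ)+1) = (s + k) + 1 by ring, Real.Gamma_add_one h1.ne']
      push_cast
      rw [this]
      field_simp

lemma simplex_measurable (n : ℕ) :
    MeasurableSet {x : Fin n → ℝ | (∀ i, 0 < x i) ∧ ∑ i, x i < 1} := by
  have : {x : Fin n → ℝ | (∀ i, 0 < x i) ∧ ∑ i, x i < 1} =
      (⋂ i, {x : Fin n → ℝ | 0 < x i}) ∩ {x : Fin n → ℝ | ∑ i, x i < 1} := by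
    ext x; simp [Set.mem_iInter]
  rw [this]
  exact MeasurableSet.inter
    (MeasurableSet.iInter fun i => measurableSet_lt measurable_const (measurable_pi_apply i))
    (measurableSet_lt (Finset.measurable_sum _ fun i _ => measurable_pi_apply i) measurable_const)
lemma integrand_measurable (n : ℕ) (α : Fin (n+1) → ℝ) :
    Measurable (fun x : Fin n → ℝ => ENNReal.ofReal (∏ j : Fin (n+1),
      (if h : (j:ℕ) < n then x ⟨j,h⟩ else 1 - ∑ i, x i) ^ (α j - 1))) := by
  refine ENNReal.measurable_ofReal.comp (Finset.measurable_prod _ fun j _ => ?_)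
  by_cases h : (j:ℕ) < n
  · simp only [h, dif_pos]
    exact (measurable_rpow_const _).comp (measurable_pi_apply _)
  · simp only [h, dif_neg]
    exact (measurable_rpow_const _).comp (measurable_const.sub
      (Finset.measurable_sum _ fun i _ => measurable_pi_apply i))

lemma dirichlet_lintegral : ∀ (n : ℕ) (α : Fin (n+1) → ℝ), (∀ j, 0 < α j) →
    ∫⁻ x in {x : Fin n → ℝ | (∀ i, 0 < x i) ∧ ∑ i, x i < 1},
      ENNReal.ofReal (∏ j : Fin (n+1),
        (if h : (j:ℕ) < n then x ⟨j,h⟩ else 1 - ∑ i, x i) ^ (α j - 1)) =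
    ENNReal.ofReal ((∏ j, Real.Gamma (α j)) / Real.Gamma (∑ j, α j)) := by
  intro n
  induction n with
  | zero =>
      intro α hα
      have hset : {x : Fin 0 → ℝ | (∀ i, 0 < x i) ∧ ∑ i, x i < 1} = Set.univ := by
        ext x; simp
      rw [hset]
      simp [Fin.prod_univ_one, Fin.sum_univ_one, volume_pi, Measure.pi_univ,
        div_self (Real.Gamma_pos_of_pos (hα 0)).ne']
  | succ n IH =>
      intro α hα
      set S : Set (Fin (n+1) → ℝ) := {x | (∀ i, 0 < x i) ∧ ∑ i, x i < 1} with hS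
      set f : (Fin (n+1) → ℝ) → ENNReal := fun x => ENNReal.ofReal (∏ j : Fin (n+2),
        (if h : (j:ℕ) < n+1 then x ⟨j,h⟩ else 1 - ∑ i, x i) ^ (α j - 1)) with hf_def
      have hf : Measurable f := integrand_measurable (n+1) α
      have hF : Measurable (S.indicator f) := hf.indicator (simplex_measurable (n+1))
      set β : ℝ := ∑ i : Fin (n+1), α (Fin.succ i) with hβ_def
      have hβ : 0 < β := Finset.sum_pos (fun i _ => hα _) ⟨0, Finset.mem_univ 0⟩
      have hα0 : 0 < α 0 := hα 0
      set e := MeasurableEquiv.piFinSuccAbove (fun _ : Fin (n+1) => ℝ) 0 with he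
      have hsymm : ∀ (t : ℝ) (y : Fin n → ℝ), e.symm (t, y) = Fin.cons t y := by
        intro t y
        simp [he, MeasurableEquiv.piFinSuccAbove, Fin.insertNth_zero, Fin.consEquiv]
      have hmp := (volume_preserving_piFinSuccAbove (fun _ : Fin (n+1) => ℝ) 0)
      -- Step 1: pass to the product space
      rw [← lintegral_indicator (simplex_measurable (n+1))]
      have step1 : ∫⁻ x, S.indicator f x =
          ∫⁻ p : ℝ × (Fin n → ℝ), S.indicator f (e.symm p) := by
        rw [← (hmp.symm e).map_eq]
        exact lintegral_map_equiv (S.indicator f) e.symm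
      rw [step1, Measure.volume_eq_prod,
        lintegral_prod (fun p => S.indicator f (e.symm p))
          ((hF.comp e.symm.measurable).aemeasurable)]
      simp only [hsymm]
      -- Step 2: the inner integral
      have hinner : ∀ t : ℝ, ∫⁻ y : Fin n → ℝ, S.indicator f (Fin.cons t y) =
          (Set.Ioo (0:ℝ) 1).indicator (fun t =>
            ENNReal.ofReal (t ^ (α 0 - 1) * (1-t) ^ (β - 1)) *
            ENNReal.ofReal ((∏ i : Fin (n+1), Real.Gamma (α (Fin.succ i))) /
              Real.Gamma β)) t := by
        intro t
        by_cases ht : t ∈ Set.Ioo (0:ℝ) 1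
        · obtain ⟨ht0, ht1⟩ := ht
          have h1t : (0:ℝ) < 1 - t := by linarith
          set G : (Fin n → ℝ) → ENNReal := fun y => S.indicator f (Fin.cons t y) with hG_def
          have hcons : Measurable fun y : Fin n → ℝ => Fin.cons (α := fun _ => ℝ) t y := by
            rw [measurable_pi_iff]
            intro j
            refine Fin.cases ?_ ?_ j
            · simpa using measurable_const
            · intro i; simpa using measurable_pi_apply i
          have hG : Measurable G := hF.comp hcons
          have hsc := lintegral_comp_smul_pi G hG h1t
          have hscale : ∫⁻ y, G y =
              ENNReal.ofReal ((1-t)^n) * ∫⁻ z, G ((1-t) • z) := by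
            rw [hsc, ← mul_assoc, ← ENNReal.ofReal_mul (by positivity),
              mul_inv_cancel₀ (by positivity), ENNReal.ofReal_one, one_mul]
          -- pointwise formula for G ((1-t) • z)
          have hpt : ∀ z : Fin n → ℝ, G ((1-t) • z) =
              Set.indicator {z : Fin n → ℝ | (∀ i, 0 < z i) ∧ ∑ i, z i < 1}
                (fun z => ENNReal.ofReal ((t ^ (α 0 - 1) * (1-t) ^ (β - 1 - n)) *
                  ∏ i : Fin (n+1),
                    (if h : (i:ℕ) < n then z ⟨i,h⟩ else 1 - ∑ k, z k) ^ (α (Fin.succ i) - 1))) z := by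
            intro z
            have hsum : ∑ i, Fin.cons (α := fun _ => ℝ) t ((1-t) • z) i
                = t + (1-t) * ∑ i, z i := by
              rw [Fin.sum_cons]
              simp [Finset.mul_sum]
            have hmem : Fin.cons (α := fun _ => ℝ) t ((1-t) • z) ∈ S ↔
                ((∀ i, 0 < z i) ∧ ∑ i, z i < 1) := by
              constructor
              · rintro ⟨h1, h2⟩
                refine ⟨fun i => ?_, ?_⟩
                · have := h1 (Fin.succ i)
                  rw [Fin.cons_succ] at this
                  simp only [Pi.smul_apply, smul_eq_mul] at this
                  rcases mul_pos_iff.mp this with ⟨_, h⟩ | ⟨h, _⟩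
                  · exact h
                  · linarith
                · rw [hsum] at h2
                  nlinarith
              · rintro ⟨h1, h2⟩
                refine ⟨fun i => ?_, ?_⟩
                · refine Fin.cases ?_ ?_ i
                  · simpa using ht0
                  · intro i
                    rw [Fin.cons_succ]
                    simp only [Pi.smul_apply, smul_eq_mul]
                    exact mul_pos h1t (h1 i)
                · rw [hsum]; nlinarith
            by_cases hz : (∀ i, 0 < z i) ∧ ∑ i, z i < 1
            · rw [Set.indicator_of_mem
                (s := {z : Fin n → ℝ | (∀ i, 0 < z i) ∧ ∑ i, z i < 1}) hz, hG_def]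
              simp only
              rw [Set.indicator_of_mem (hmem.mpr hz), hf_def]
              simp only
              congr 1
              rw [Fin.prod_univ_succ]
              -- first factor
              have hfst : (if h : ((0 : Fin (n+2)):ℕ) < n+1
                  then Fin.cons (α := fun _ => ℝ) t ((1-t) • z) ⟨(0 : Fin (n+2)), h⟩
                  else 1 - ∑ i, Fin.cons (α := fun _ => ℝ) t ((1-t) • z) i) = t := by
                rw [dif_pos (by simp)]
                exact Fin.cons_zero _ _
              rw [hfst]
              -- remaining factors
              have hrest : ∀ i : Fin (n+1),
                  (if h : ((Fin.succ i : Fin (n+2)):ℕ) < n+1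
                    then Fin.cons (α := fun _ => ℝ) t ((1-t) • z) ⟨(Fin.succ i : Fin (n+2)), h⟩
                    else 1 - ∑ k, Fin.cons (α := fun _ => ℝ) t ((1-t) • z) k)
                  = (1-t) * (if h : (i:ℕ) < n then z ⟨i,h⟩ else 1 - ∑ k, z k) := by
                intro i
                by_cases hi : (i:ℕ) < n
                · rw [dif_pos (by simpa using Nat.succ_lt_succ hi), dif_pos hi]
                  have : (⟨((Fin.succ i : Fin (n+2)):ℕ), by simpa using Nat.succ_lt_succ hi⟩ : Fin (n+1))
                      = Fin.succ ⟨(i:ℕ), hi⟩ := by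
                    simp [Fin.ext_iff]
                  rw [this, Fin.cons_succ]
                  simp
                · rw [dif_neg (by simpa using Nat.succ_lt_succ_iff.not.mpr hi), dif_neg hi, hsum]
                  ring
              have hbig : ∏ i : Fin (n+1),
                    (if h : ((Fin.succ i : Fin (n+2)):ℕ) < n+1
                      then Fin.cons (α := fun _ => ℝ) t ((1-t) • z) ⟨(Fin.succ i : Fin (n+2)), h⟩
                      else 1 - ∑ k, Fin.cons (α := fun _ => ℝ) t ((1-t) • z) k) ^ (α (Fin.succ i) - 1)
                  = (1-t) ^ (β - 1 - n) *
                      ∏ i : Fin (n+1), (if h : (i:ℕ) < n then z ⟨i,h⟩ else 1 - ∑ k, z k) ^ (α (Fin.succ i) - 1) := by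
                calc ∏ i : Fin (n+1),
                    (if h : ((Fin.succ i : Fin (n+2)):ℕ) < n+1
                      then Fin.cons (α := fun _ => ℝ) t ((1-t) • z) ⟨(Fin.succ i : Fin (n+2)), h⟩
                      else 1 - ∑ k, Fin.cons (α := fun _ => ℝ) t ((1-t) • z) k) ^ (α (Fin.succ i) - 1)
                  = ∏ i : Fin (n+1), ((1-t) ^ (α (Fin.succ i) - 1) *
                      (if h : (i:ℕ) < n then z ⟨i,h⟩ else 1 - ∑ k, z k) ^ (α (Fin.succ i) - 1)) := by
                      refine Finset.prod_congr rfl fun i _ => ?_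
                      rw [hrest i]
                      refine Real.mul_rpow h1t.le ?_
                      by_cases hi : (i:ℕ) < n
                      · rw [dif_pos hi]; exact (hz.1 _).le
                      · rw [dif_neg hi]; linarith [hz.2]
                  _ = (1-t) ^ (β - 1 - n) *
                      ∏ i : Fin (n+1), (if h : (i:ℕ) < n then z ⟨i,h⟩ else 1 - ∑ k, z k) ^ (α (Fin.succ i) - 1) := by
                      rw [Finset.prod_mul_distrib, ← Real.rpow_sum_of_pos h1t]
                      congr 2
                      rw [Finset.sum_sub_distrib]
                      simp [hβ_def]
                      push_cast
                      ring
              rw [hbig]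
              ring
            · rw [Set.indicator_of_notMem
                (s := {z : Fin n → ℝ | (∀ i, 0 < z i) ∧ ∑ i, z i < 1}) hz, hG_def]
              simp only
              rw [Set.indicator_of_notMem (s := S) (fun h => hz (hmem.mp h))]
          -- put the inner integral together
          rw [Set.indicator_of_mem (Set.mem_Ioo.mpr ⟨ht0, ht1⟩)]
          calc ∫⁻ y, S.indicator f (Fin.cons t y)
              = ∫⁻ y, G y := rfl
            _ = ENNReal.ofReal ((1-t)^n) * ∫⁻ z, G ((1-t) • z) := hscale
            _ = ENNReal.ofReal ((1-t)^n) *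
                  ∫⁻ z in {z : Fin n → ℝ | (∀ i, 0 < z i) ∧ ∑ i, z i < 1},
                    ENNReal.ofReal ((t ^ (α 0 - 1) * (1-t) ^ (β - 1 - n)) *
                      ∏ i : Fin (n+1),
                        (if h : (i:ℕ) < n then z ⟨i,h⟩ else 1 - ∑ k, z k) ^ (α (Fin.succ i) - 1)) := by
                rw [← lintegral_indicator (simplex_measurable n)]
                congr 1
                exact lintegral_congr hpt
            _ = ENNReal.ofReal ((1-t)^n) * (ENNReal.ofReal (t ^ (α 0 - 1) * (1-t) ^ (β - 1 - n)) *
                  ∫⁻ z in {z : Fin n → ℝ | (∀ i, 0 < z i) ∧ ∑ i, z i < 1},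
                    ENNReal.ofReal (∏ i : Fin (n+1),
                      (if h : (i:ℕ) < n then z ⟨i,h⟩ else 1 - ∑ k, z k) ^ (α (Fin.succ i) - 1))) := by
                congr 1
                calc ∫⁻ z in {z : Fin n → ℝ | (∀ i, 0 < z i) ∧ ∑ i, z i < 1},
                      ENNReal.ofReal ((t ^ (α 0 - 1) * (1-t) ^ (β - 1 - (n:ℝ))) *
                        ∏ i : Fin (n+1),
                          (if h : (i:ℕ) < n then z ⟨i,h⟩ else 1 - ∑ k, z k) ^ (α (Fin.succ i) - 1))
                    = ∫⁻ z in {z : Fin n → ℝ | (∀ i, 0 < z i) ∧ ∑ i, z i < 1},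
                        ENNReal.ofReal (t ^ (α 0 - 1) * (1-t) ^ (β - 1 - (n:ℝ))) *
                        ENNReal.ofReal (∏ i : Fin (n+1),
                          (if h : (i:ℕ) < n then z ⟨i,h⟩ else 1 - ∑ k, z k) ^ (α (Fin.succ i) - 1)) :=
                      lintegral_congr fun z => by
                        rw [← ENNReal.ofReal_mul (by positivity)]
                  _ = _ := lintegral_const_mul' _ _ ENNReal.ofReal_ne_top
            _ = ENNReal.ofReal (t ^ (α 0 - 1) * (1-t) ^ (β - 1)) *
                  ENNReal.ofReal ((∏ i : Fin (n+1), Real.Gamma (α (Fin.succ i))) / Real.Gamma β) := by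
                rw [IH (fun i => α (Fin.succ i)) (fun i => hα _), ← mul_assoc,
                  ← ENNReal.ofReal_mul (by positivity)]
                congr 1
                rw [← Real.rpow_natCast (1-t) n,
                  show (1-t) ^ ((n:ℝ)) * (t ^ (α 0 - 1) * (1-t) ^ (β - 1 - (n:ℝ)))
                    = t ^ (α 0 - 1) * ((1-t) ^ ((n:ℝ)) * (1-t) ^ (β - 1 - (n:ℝ))) from by ring,
                  ← Real.rpow_add h1t,
                  show (n:ℝ) + (β - 1 - (n:ℝ)) = β - 1 from by ring]
        · rw [Set.indicator_of_notMem ht]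
          have hzero : ∀ y : Fin n → ℝ, S.indicator f (Fin.cons t y) = 0 := by
            intro y
            refine Set.indicator_of_notMem (s := S) ?_ f
            rintro ⟨h1, h2⟩
            rw [Fin.sum_cons] at h2
            rw [Set.mem_Ioo, not_and_or] at ht
            rcases ht with h | h
            · have := h1 0
              rw [Fin.cons_zero] at this
              exact h this
            · have hy : 0 ≤ ∑ i, y i :=
                Finset.sum_nonneg fun i _ => by
                  have := h1 (Fin.succ i); rw [Fin.cons_succ] at this; exact this.le
              rw [not_lt] at h
              linarith
          simp [hzero]
      simp only [hinner]
      -- Step 3: outer integral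
      rw [lintegral_indicator measurableSet_Ioo,
        lintegral_mul_const' _ _ ENNReal.ofReal_ne_top,
        real_beta_lintegral (α 0) β hα0 hβ, ← ENNReal.ofReal_mul (by positivity)]
      congr 1
      have hsum : ∑ j : Fin (n+2), α j = α 0 + β := Fin.sum_univ_succ α
      have hprod : ∏ j : Fin (n+2), Real.Gamma (α j)
          = Real.Gamma (α 0) * ∏ i : Fin (n+1), Real.Gamma (α (Fin.succ i)) :=
        Fin.prod_univ_succ _
      rw [hsum, hprod]
      have h1 : Real.Gamma (α 0 + β) ≠ 0 := (Real.Gamma_pos_of_pos (by linarith)).ne'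
      have h2 : Real.Gamma β ≠ 0 := (Real.Gamma_pos_of_pos hβ).ne'
      field_simp


lemma real_integrand_measurable (n : ℕ) (c : Fin (n+1) → ℝ) :
    Measurable (fun x : Fin n → ℝ => ∏ j : Fin (n+1),
      (if h : (j:ℕ) < n then x ⟨j,h⟩ else 1 - ∑ i, x i) ^ (c j)) := by
  refine Finset.measurable_prod _ fun j _ => ?_
  by_cases h : (j:ℕ) < n
  · simp only [h, dif_pos]
    exact (measurable_rpow_const _).comp (measurable_pi_apply _)
  · simp only [h, dif_neg]
    exact (measurable_rpow_const _).comp (measurable_const.sub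
      (Finset.measurable_sum _ fun i _ => measurable_pi_apply i))

lemma kt_aux (n : ℕ) (a : Fin (n+1) → ℕ) :
    ktProb (n+1) a =
      ∫ x in {x : Fin n → ℝ | (∀ i, 0 < x i) ∧ ∑ i, x i < 1},
        (Real.Gamma ((((n+1) : ℕ) : ℝ)/2) / Real.Gamma (1/2) ^ (n+1)) *
          ∏ j : Fin (n+1),
            (if h : (j : ℕ) < n then x ⟨j, h⟩ else 1 - ∑ i, x i)
              ^ ((a j : ℝ) - 1/2) := by
  simp only [Nat.cast_add, Nat.cast_one]
  set S : Set (Fin n → ℝ) := {x | (∀ i, 0 < x i) ∧ ∑ i, x i < 1} with hS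
  set g : (Fin n → ℝ) → ℝ := fun x => ∏ j : Fin (n+1),
    (if h : (j : ℕ) < n then x ⟨j, h⟩ else 1 - ∑ i, x i) ^ ((a j : ℝ) - 1/2) with hg
  set c : ℝ := Real.Gamma (((n+1) : ℝ)/2) / Real.Gamma (1/2) ^ (n+1) with hc
  have hgpos : ∀ x ∈ S, 0 ≤ g x := by
    intro x hx
    refine Finset.prod_nonneg fun j _ => ?_
    by_cases h : (j:ℕ) < n
    · rw [dif_pos h]; exact Real.rpow_nonneg (hx.1 _).le _
    · rw [dif_neg h]; exact Real.rpow_nonneg (by linarith [hx.2]) _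
  have hmeas : Measurable g := real_integrand_measurable n _
  -- rewrite the RHS
  have h1 : ∫ x in S, c * g x = c * ∫ x in S, g x := integral_const_mul c g
  rw [h1]
  have h2 : ∫ x in S, g x = (∫⁻ x in S, ENNReal.ofReal (g x)).toReal := by
    rw [integral_eq_lintegral_of_nonneg_ae
      ((ae_restrict_mem (simplex_measurable n)).mono hgpos)
      hmeas.aestronglyMeasurable]
  set α : Fin (n+1) → ℝ := fun j => 1/2 + (a j : ℝ) with hα_def
  have hα : ∀ j, 0 < α j := fun j => by positivity
  have h3 : ∫⁻ x in S, ENNReal.ofReal (g x) =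
      ENNReal.ofReal ((∏ j, Real.Gamma (α j)) / Real.Gamma (∑ j, α j)) := by
    rw [← dirichlet_lintegral n α hα]
    refine lintegral_congr fun x => ?_
    congr 1
    refine Finset.prod_congr rfl fun j _ => ?_
    congr 1
    simp [hα_def]
    ring
  set D : ℝ := (∏ j, Real.Gamma (α j)) / Real.Gamma (∑ j, α j) with hD
  have hDpos : 0 ≤ D := by
    have h4 : 0 < Real.Gamma (∑ j, α j) :=
      Real.Gamma_pos_of_pos (Finset.sum_pos (fun j _ => hα j) ⟨0, Finset.mem_univ 0⟩)
    have h5 : 0 < ∏ j, Real.Gamma (α j) :=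
      Finset.prod_pos fun j _ => Real.Gamma_pos_of_pos (hα j)
    positivity
  rw [h2, h3, ENNReal.toReal_ofReal hDpos]
  -- now the pure Gamma computation
  have hhalf : (0:ℝ) < 1/2 := by norm_num
  have hm2 : (0:ℝ) < ((n+1):ℝ)/2 := by positivity
  have hnum : ∀ j : Fin (n+1), ∏ i ∈ Finset.range (a j), ((i : ℝ) + 1/2)
      = Real.Gamma (α j) / Real.Gamma (1/2) := by
    intro j
    have e1 : α j = 1/2 + (a j : ℝ) := by simp [hα_def]
    rw [e1, ← prod_gamma (1/2) hhalf (a j)]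
    exact Finset.prod_congr rfl fun i _ => by ring
  have hden : ∏ i ∈ Finset.range (∑ j, a j), (((n+1) : ℝ)/2 + (i : ℝ))
      = Real.Gamma (((n+1):ℝ)/2 + (∑ j, a j : ℕ)) / Real.Gamma (((n+1):ℝ)/2) :=
    prod_gamma _ hm2 _
  have hsum : ∑ j, α j = ((n+1):ℝ)/2 + ((∑ j, a j : ℕ) : ℝ) := by
    rw [hα_def, Finset.sum_add_distrib]
    push_cast
    simp [Finset.sum_const, Finset.card_univ]
    ring
  rw [ktProb]
  push_cast
  rw [Finset.prod_congr rfl (fun j _ => hnum j), hden, Finset.prod_div_distrib,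
    Finset.prod_const, Finset.card_univ, Fintype.card_fin]
  rw [hD, hsum]
  have hG1 : Real.Gamma (1/2) ≠ 0 := (Real.Gamma_pos_of_pos hhalf).ne'
  have hG2 : Real.Gamma (((n+1):ℝ)/2) ≠ 0 := (Real.Gamma_pos_of_pos hm2).ne'
  have hG3 : Real.Gamma (((n+1):ℝ)/2 + ((∑ j, a j : ℕ) : ℝ)) ≠ 0 :=
    (Real.Gamma_pos_of_pos (by positivity)).ne'
  have hc' : ((n:ℝ)+1)/2 = ((n+1):ℝ)/2 := by push_cast; ring
  rw [hc']
  have key : ∀ (A B C H : ℝ), H ≠ 0 → B ≠ 0 → C ≠ 0 →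
      A / H / (B / C) = C / H * (A / B) := by
    intro A B C H h1 h2 h3
    field_simp
  exact key _ _ _ _ (pow_ne_zero _ hG1) hG3 hG2
end auxiliary

/-- the KT probability equals the Dirichlet(1/2,…,1/2) (Jeffreys
prior) mixture of i.i.d. multinomial probabilities.  The probability simplex
is parametrised by its first `m-1` coordinates, the last one being
`1 - ∑ x i`; the integrand `∏_j θ_j^{a(j) - 1/2}` combines the multinomial
likelihood `∏_j θ_j^{a(j)}` with the Jeffreys density
`Γ(m/2)/Γ(1/2)^m ∏_j θ_j^{-1/2}`. -/
theorem ktProb_eq_dirichlet_mixture (m : ℕ) (hm : 2 ≤ m) (a : Fin m → ℕ) :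
    ktProb m a =
      ∫ x in {x : Fin (m - 1) → ℝ | (∀ i, 0 < x i) ∧ ∑ i, x i < 1},
        (Real.Gamma ((m : ℝ)/2) / Real.Gamma (1/2) ^ m) *
          ∏ j : Fin m,
            (if h : (j : ℕ) < m - 1 then x ⟨j, h⟩ else 1 - ∑ i, x i)
              ^ ((a j : ℝ) - 1/2) := by
  obtain ⟨n, rfl⟩ : ∃ n, m = n + 1 := ⟨m - 1, by omega⟩
  exact kt_aux n a
end
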